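/- Coupling, part (a): let β > 0 and let γ be a loop supported in B_N with 𝒞_γ nonempty. If n is distributed according to the random current model 𝐏^γ_{B_N,β}, then the pointwise reduction n mod 2 is distributed according to the high-temperature model P^γ_{B_N,β}; that is, for every ω ∈ 𝒫_γ^{ht}, 𝐏^γ_{B_N,β}({n : n ≡ ω mod 2}) = P^γ_{B_N,β}(ω). -/
import Mathlib


open scoped Classical

namespace LGT

/-- A site (vertex) of the lattice `ℤ^m`. -/
abbrev Site (m : ℕ) := Fin m → ℤ

/-- The `i`-th unit vector. -/
def unitVec (m : ℕ) (i : Fin m) : Site m := fun j => if j = i then 1 else 0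

/-- An oriented nearest-neighbour edge of `ℤ^m`: it joins `base` and `base + e_dir`,
oriented from `base` to `base + e_dir` when `ori = true`, and oppositely otherwise. -/
structure OEdge (m : ℕ) where
  base : Site m
  dir : Fin m
  ori : Bool
deriving DecidableEq

/-- An oriented plaquette of `ℤ^m` (valid when `dir1 < dir2`): the unit square with
corners `base, base + e_dir1, base + e_dir2, base + e_dir1 + e_dir2`, positively
oriented when `ori = true`. -/
structure OPlaq (m : ℕ) where
  base : Site m
  dir1 : Fin m
  dir2 : Fin m
  ori : Bool
deriving DecidableEq

/-- The same edge with reversed orientation. -/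
def OEdge.neg {m : ℕ} (e : OEdge m) : OEdge m := ⟨e.base, e.dir, !e.ori⟩

/-- The same plaquette with reversed orientation. -/
def OPlaq.neg {m : ℕ} (p : OPlaq m) : OPlaq m := ⟨p.base, p.dir1, p.dir2, !p.ori⟩

/-- The source vertex of an oriented edge. -/
def OEdge.src {m : ℕ} (e : OEdge m) : Site m :=
  if e.ori then e.base else e.base + unitVec m e.dir

/-- The target vertex of an oriented edge. -/
def OEdge.tgt {m : ℕ} (e : OEdge m) : Site m :=
  if e.ori then e.base + unitVec m e.dir else e.base

/-- `x ∈ B_N = [-N,N]^m ∩ ℤ^m`. -/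
def inBox (m N : ℕ) (x : Site m) : Prop := ∀ i, |x i| ≤ (N : ℤ)

/-- `C_1(B_N)`: oriented edges with both endpoints in `B_N`. -/
def C1 (m N : ℕ) : Set (OEdge m) :=
  {e | inBox m N e.base ∧ inBox m N (e.base + unitVec m e.dir)}

/-- The four corners of a plaquette. -/
def OPlaq.corners {m : ℕ} (p : OPlaq m) : List (Site m) :=
  [p.base, p.base + unitVec m p.dir1, p.base + unitVec m p.dir2,
    p.base + unitVec m p.dir1 + unitVec m p.dir2]

/-- The four oriented boundary edges of an oriented plaquette. -/
def OPlaq.bdry {m : ℕ} (p : OPlaq m) : List (OEdge m) :=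
  let l : List (OEdge m) :=
    [⟨p.base, p.dir1, true⟩, ⟨p.base + unitVec m p.dir1, p.dir2, true⟩,
     ⟨p.base + unitVec m p.dir2, p.dir1, false⟩, ⟨p.base, p.dir2, false⟩]
  if p.ori then l else l.map OEdge.neg

/-- `C_2(B_N)`: oriented plaquettes with all corners in `B_N`. -/
def C2 (m N : ℕ) : Set (OPlaq m) :=
  {p | p.dir1 < p.dir2 ∧ ∀ x ∈ p.corners, inBox m N x}

/-- `C_2(B_N)^+`: positively oriented plaquettes of `C_2(B_N)`. -/
def C2plus (m N : ℕ) : Set (OPlaq m) := {p | p ∈ C2 m N ∧ p.ori = true}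

/-- `supp ∂̂e`: the plaquettes of `C_2(B_N)` whose oriented boundary contains `e`. -/
def cob (m N : ℕ) (e : OEdge m) : Set (OPlaq m) := {p | p ∈ C2 m N ∧ e ∈ p.bdry}

/-- A loop: a finitely supported `ℤ`-valued function on oriented edges with values in
`{-1,0,1}`, odd under orientation reversal, whose boundary vanishes as a `0`-chain. -/
structure IsLoop (m : ℕ) (γ : OEdge m → ℤ) : Prop where
  finite_supp : (Function.support γ).Finite
  vals : ∀ e, γ e = -1 ∨ γ e = 0 ∨ γ e = 1
  antisym : ∀ e, γ (OEdge.neg e) = - γ e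
  bdry_zero : ∀ v : Site m,
    (∑ᶠ e : OEdge m, γ e *
      ((if OEdge.tgt e = v then 1 else 0) - (if OEdge.src e = v then (1 : ℤ) else 0))) = 0

/-- A loop supported in `B_N`. -/
def LoopIn (m N : ℕ) (γ : OEdge m → ℤ) : Prop :=
  IsLoop m γ ∧ ∀ e, γ e ≠ 0 → e ∈ C1 m N

/-- `Ω^1(B_N, ℤ₂)`: `ℤ₂`-valued one-forms on `C_1(B_N)`. -/
def Omega1 (m N : ℕ) : Set (OEdge m → ZMod 2) :=
  {σ | (∀ e, e ∉ C1 m N → σ e = 0) ∧ ∀ e, σ (OEdge.neg e) = - σ e}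

/-- The natural representation `ρ(g) = e^{iπ g} ∈ {±1}` of `ℤ₂`. -/
noncomputable def rho (g : ZMod 2) : ℝ := if g = 0 then 1 else -1

/-- The exterior derivative `dσ(p) = Σ_{e ∈ ∂p} σ(e)`. -/
def dOne {m : ℕ} (σ : OEdge m → ZMod 2) (p : OPlaq m) : ZMod 2 := (p.bdry.map σ).sum

/-- The Wilson action `S(σ) = -Σ_{p ∈ C_2(B_N)} ρ(dσ(p))`. -/
noncomputable def action (m N : ℕ) (σ : OEdge m → ZMod 2) : ℝ :=
  - ∑ᶠ p ∈ C2 m N, rho (dOne σ p)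

/-- The Wilson loop variable `W_γ(σ) = Π_{e ∈ (supp γ)^+} ρ(σ(e))`. -/
noncomputable def wilson (m : ℕ) (γ : OEdge m → ℤ) (σ : OEdge m → ZMod 2) : ℝ :=
  ∏ᶠ e ∈ {e : OEdge m | γ e ≠ 0 ∧ e.ori = true}, rho (σ e)

/-- `Z_{β,N}[γ] = Σ_{σ ∈ Ω^1(B_N,ℤ₂)} W_γ(σ) e^{-β S(σ)}`. -/
noncomputable def Z (m N : ℕ) (β : ℝ) (γ : OEdge m → ℤ) : ℝ :=
  ∑ᶠ σ ∈ Omega1 m N, wilson m γ σ * Real.exp (- β * action m N σ)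

/-- The finite-volume Gibbs expectation `E_{N,β}[f]`. -/
noncomputable def Eexp (m N : ℕ) (β : ℝ) (f : (OEdge m → ZMod 2) → ℝ) : ℝ :=
  (∑ᶠ σ ∈ Omega1 m N, f σ * Real.exp (- β * action m N σ)) /
    (∑ᶠ σ ∈ Omega1 m N, Real.exp (- β * action m N σ))

/-- `E_{N,β}[W_γ]`. -/
noncomputable def Ewilson (m N : ℕ) (β : ℝ) (γ : OEdge m → ℤ) : ℝ :=
  Eexp m N β (wilson m γ)

/-- A current: an integer-valued `2`-form on `C_2(B_N)` that is nonnegative on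
positively oriented plaquettes. -/
def IsCurrent (m N : ℕ) (n : OPlaq m → ℤ) : Prop :=
  (∀ p, p ∉ C2 m N → n p = 0) ∧ (∀ p, n (OPlaq.neg p) = - n p) ∧
    (∀ p ∈ C2plus m N, 0 ≤ n p)

/-- `𝒞_γ`: the currents with source `γ`. -/
def CurSet (m N : ℕ) (γ : OEdge m → ℤ) : Set (OPlaq m → ℤ) :=
  {n | IsCurrent m N n ∧ ∀ e ∈ C1 m N,
      ((γ e : ZMod 2) + ∑ᶠ p ∈ cob m N e, ((n p : ZMod 2))) = 0}

/-- The weight `w_β(n) = Π_{p ∈ C_2(B_N)^+} (2β)^{n(p)}/n(p)!` of a current. -/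
noncomputable def wgt (m N : ℕ) (β : ℝ) (n : OPlaq m → ℤ) : ℝ :=
  ∏ᶠ p ∈ C2plus m N, (2 * β) ^ (n p).toNat / (Nat.factorial (n p).toNat)

/-- `q ≤ n` on positively oriented plaquettes. -/
def leOn (m N : ℕ) (q n : OPlaq m → ℤ) : Prop := ∀ p ∈ C2plus m N, q p ≤ n p

/-- `𝒫_γ^{ht}`: `ℤ₂`-valued `2`-forms on `C_2(B_N)` with `δω = γ (mod 2)`. -/
def HTset (m N : ℕ) (γ : OEdge m → ℤ) : Set (OPlaq m → ZMod 2) :=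
  {ω | (∀ p, p ∉ C2 m N → ω p = 0) ∧ (∀ p, ω (OPlaq.neg p) = - ω p) ∧
    ∀ e ∈ C1 m N, (∑ᶠ p ∈ cob m N e, ω p) = (γ e : ZMod 2)}

/-- `(supp ω)^+`. -/
def suppPlus (m N : ℕ) (ω : OPlaq m → ZMod 2) : Set (OPlaq m) :=
  {p | p ∈ C2plus m N ∧ ω p ≠ 0}

/-- The high-temperature weight `(tanh 2β)^{|(supp ω)^+|}`. -/
noncomputable def htWeight (m N : ℕ) (β : ℝ) (ω : OPlaq m → ZMod 2) : ℝ :=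
  Real.tanh (2 * β) ^ (Nat.card ↥(suppPlus m N ω))

/-- The high-temperature model `P^γ_{B_N,β}`: probability mass of `ω ∈ 𝒫_γ^{ht}`. -/
noncomputable def htProb (m N : ℕ) (β : ℝ) (γ : OEdge m → ℤ) (ω : OPlaq m → ZMod 2) : ℝ :=
  htWeight m N β ω / ∑ᶠ ω' ∈ HTset m N γ, htWeight m N β ω'

/-- The random current model `𝐏^γ_{B_N,β}`: probability of an event `A ⊆ 𝒞_γ`. -/
noncomputable def rcProb (m N : ℕ) (β : ℝ) (γ : OEdge m → ℤ) (A : Set (OPlaq m → ℤ)) : ℝ :=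
  (∑' n : ↥(CurSet m N γ ∩ A), wgt m N β n) / (∑' n : ↥(CurSet m N γ), wgt m N β n)

/-- The trace `n̂` of a current: the set of positively oriented plaquettes where `n > 0`. -/
def hatCur (m N : ℕ) (n : OPlaq m → ℤ) : Set (OPlaq m) :=
  {p | p ∈ C2plus m N ∧ 0 < n p}

/-- The probability that iid Bernoulli plaquette percolation `Ψ_q` on `C_2(B_N)^+`
produces exactly the configuration (subset) `A`. -/
noncomputable def bernoulli (m N : ℕ) (q : ℝ) (A : Set (OPlaq m)) : ℝ :=
  ∏ᶠ p ∈ C2plus m N, (if p ∈ A then q else 1 - q)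

/-- `∂P ≡ γ (mod 2)`: for every edge `e ∈ C_1(B_N)` the number of plaquettes of `P`
whose boundary contains `e` or `-e` is congruent to `γ(e)` mod `2`. -/
def BdryCong (m N : ℕ) (P : Set (OPlaq m)) (γ : OEdge m → ℤ) : Prop :=
  ∀ e ∈ C1 m N,
    ((Nat.card ↥{p ∈ P | e ∈ p.bdry ∨ OEdge.neg e ∈ p.bdry} : ZMod 2)) = (γ e : ZMod 2)

/-- `𝒫_γ`: subsets of `C_2(B_N)^+` containing a subset with boundary `γ (mod 2)`. -/
def PlaqSet (m N : ℕ) (γ : OEdge m → ℤ) : Set (Set (OPlaq m)) :=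
  {P | P ⊆ C2plus m N ∧ ∃ P', P' ⊆ P ∧ BdryCong m N P' γ}

/-- `N₀(P)`: the number of `σ ∈ Ω^1(B_N,ℤ₂)` with `dσ(p) = 0` for all `p ∈ P`. -/
noncomputable def N0 (m N : ℕ) (P : Set (OPlaq m)) : ℕ :=
  Nat.card ↥{σ ∈ Omega1 m N | ∀ p ∈ P, dOne σ p = 0}

/-- The random cluster weight `N₀(P) q^{|P|} (1-q)^{|C_2(B_N)^+ ∖ P|}`. -/
noncomputable def rcmWeight (m N : ℕ) (q : ℝ) (P : Set (OPlaq m)) : ℝ :=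
  (N0 m N P : ℝ) * q ^ (Nat.card ↥P) * (1 - q) ^ (Nat.card ↥(C2plus m N \ P))

/-- The random cluster model `φ^γ_{B_N,q}`: probability mass of `P` (zero off `𝒫_γ`). -/
noncomputable def rcmProb (m N : ℕ) (q : ℝ) (γ : OEdge m → ℤ) (P : Set (OPlaq m)) : ℝ :=
  (if P ∈ PlaqSet m N γ then rcmWeight m N q P else 0) /
    ∑ᶠ P' ∈ PlaqSet m N γ, rcmWeight m N q P'

/-- `S_γ(P)`: the subsets of `P` with boundary `γ (mod 2)`. -/
def Sset (m N : ℕ) (γ : OEdge m → ℤ) (P : Set (OPlaq m)) : Set (Set (OPlaq m)) :=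
  {P' | P' ⊆ P ∧ BdryCong m N P' γ}

/-- The `ℤ₂`-valued `2`-form whose support among positively oriented plaquettes is `P'`. -/
noncomputable def formOf {m : ℕ} (P' : Set (OPlaq m)) : OPlaq m → ZMod 2 :=
  fun p => if p ∈ P' ∨ OPlaq.neg p ∈ P' then 1 else 0

/-- The vertices of the support of a loop. -/
def vertsOf (m : ℕ) (γ : OEdge m → ℤ) : Set (Site m) :=
  {x | ∃ e, γ e ≠ 0 ∧ (x = OEdge.src e ∨ x = OEdge.tgt e)}

/-- The graph (`ℓ¹`) distance between two sites of `ℤ^m`. -/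
def distL1 (m : ℕ) (x y : Site m) : ℕ := ∑ i, (x i - y i).natAbs

/-- The minimal graph distance between the supports of two loops. -/
noncomputable def suppDist (m : ℕ) (γ γ' : OEdge m → ℤ) : ℕ :=
  sInf {d | ∃ x ∈ vertsOf m γ, ∃ y ∈ vertsOf m γ', d = distL1 m x y}

/-- `area(γ) = min_{n ∈ 𝒞_γ} Σ_{p ∈ C_2(B_N)^+} n(p)`. -/
noncomputable def areaOf (m N : ℕ) (γ : OEdge m → ℤ) : ℕ :=
  sInf {k : ℕ | ∃ n ∈ CurSet m N γ, (∑ᶠ p ∈ C2plus m N, n p) = (k : ℤ)}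

/-- Translation of a loop by a lattice vector. -/
def translate (m : ℕ) (v : Site m) (γ : OEdge m → ℤ) : OEdge m → ℤ :=
  fun e => γ ⟨e.base - v, e.dir, e.ori⟩

/-- The site `a·e₀ + b·e₁` in the fixed coordinate plane spanned by the first two
coordinate directions. -/
def planeSite (m : ℕ) (h : 1 < m) (a b : ℤ) : Site m :=
  fun j => if j = (⟨0, by omega⟩ : Fin m) then a else if j = (⟨1, h⟩ : Fin m) then b else 0

/-- The axis-parallel rectangular loop `γ_{R,T}` with corners `0, R·e₀, R·e₀+T·e₁, T·e₁`
in the fixed coordinate plane spanned by the first two coordinate directions. -/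
noncomputable def rectLoop (m : ℕ) (h : 1 < m) (R T : ℕ) : OEdge m → ℤ := fun e =>
  (∑ k ∈ Finset.range R,
    ((if e = ⟨planeSite m h k 0, ⟨0, by omega⟩, true⟩ then (1 : ℤ) else 0)
      - (if e = OEdge.neg ⟨planeSite m h k 0, ⟨0, by omega⟩, true⟩ then 1 else 0)
      - (if e = ⟨planeSite m h k T, ⟨0, by omega⟩, true⟩ then 1 else 0)
      + (if e = OEdge.neg ⟨planeSite m h k T, ⟨0, by omega⟩, true⟩ then 1 else 0)))
  + (∑ k ∈ Finset.range T,
    ((if e = ⟨planeSite m h R k, ⟨1, h⟩, true⟩ then (1 : ℤ) else 0)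
      - (if e = OEdge.neg ⟨planeSite m h R k, ⟨1, h⟩, true⟩ then 1 else 0)
      - (if e = ⟨planeSite m h 0 k, ⟨1, h⟩, true⟩ then 1 else 0)
      + (if e = OEdge.neg ⟨planeSite m h 0 k, ⟨1, h⟩, true⟩ then 1 else 0)))

section CouplingAux

variable {m N : ℕ}

lemma oplaq_neg_neg (p : OPlaq m) : p.neg.neg = p := by
  cases p; simp [OPlaq.neg]

lemma neg_mem_C2 {p : OPlaq m} (hp : p ∈ C2 m N) : p.neg ∈ C2 m N := hp

lemma neg_ori (p : OPlaq m) : (p.neg).ori = !p.ori := rfl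

lemma neg_mem_C2plus {p : OPlaq m} (hp : p ∈ C2 m N) (ho : p.ori = false) :
    p.neg ∈ C2plus m N := ⟨neg_mem_C2 hp, by simp [neg_ori, ho]⟩

lemma notMem_C2 {p : OPlaq m} (h1 : p ∉ C2plus m N) (h2 : p.neg ∉ C2plus m N) :
    p ∉ C2 m N := by
  intro hp
  cases ho : p.ori with
  | false => exact h2 (neg_mem_C2plus hp ho)
  | true => exact h1 ⟨hp, ho⟩

lemma ext_plus {α : Type*} [AddGroup α] {f g : OPlaq m → α}
    (hf0 : ∀ p, p ∉ C2 m N → f p = 0) (hfa : ∀ p, f (OPlaq.neg p) = - f p)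
    (hg0 : ∀ p, p ∉ C2 m N → g p = 0) (hga : ∀ p, g (OPlaq.neg p) = - g p)
    (h : ∀ p ∈ C2plus m N, f p = g p) : f = g := by
  funext p
  by_cases hp : p ∈ C2 m N
  · cases ho : p.ori with
    | true => exact h p ⟨hp, ho⟩
    | false =>
      have h2 := h _ (neg_mem_C2plus hp ho)
      have e1 : f p = - f p.neg := by rw [hfa p, neg_neg]
      have e2 : g p = - g p.neg := by rw [hga p, neg_neg]
      rw [e1, e2, h2]
  · rw [hf0 p hp, hg0 p hp]

lemma C2_finite (m N : ℕ) : (C2 m N).Finite := by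
  have h : C2 m N ⊆ (fun t : (Fin m → ↥(Set.Icc (-(N:ℤ)) (N:ℤ))) × Fin m × Fin m × Bool =>
      (⟨fun i => (t.1 i : ℤ), t.2.1, t.2.2.1, t.2.2.2⟩ : OPlaq m)) '' Set.univ := by
    intro p hp
    have hb : inBox m N p.base := hp.2 p.base (by simp [OPlaq.corners])
    refine ⟨⟨fun i => ⟨p.base i, ?_⟩, p.dir1, p.dir2, p.ori⟩, Set.mem_univ _, rfl⟩
    exact Set.mem_Icc.mpr (abs_le.mp (hb i))
  exact (Set.finite_univ.image _).subset h

lemma C2plus_finite (m N : ℕ) : (C2plus m N).Finite :=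
  (C2_finite m N).subset fun _ hp => hp.1

lemma HTset_finite (γ : OEdge m → ℤ) : (HTset m N γ).Finite := by
  haveI := (C2plus_finite m N).to_subtype
  apply Set.Finite.of_finite_image (f := fun ω (p : ↥(C2plus m N)) => ω ↑p)
  · exact Set.toFinite _
  · intro ω hω ω' hω' hh
    exact ext_plus hω.1 hω.2.1 hω'.1 hω'.2.1 (fun p hp => congrFun hh ⟨p, hp⟩)

lemma zmod2_natCast_eq_zero_iff (k : ℕ) : ((k : ZMod 2) = 0) ↔ k % 2 = 0 := by
  rw [ZMod.natCast_eq_zero_iff k 2]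
  omega

lemma zmod2_natCast_eq_one_iff (k : ℕ) : ((k : ZMod 2) = 1) ↔ k % 2 = 1 := by
  rcases Nat.mod_two_eq_zero_or_one k with h | h
  · have h0 : (k : ZMod 2) = 0 := (zmod2_natCast_eq_zero_iff k).mpr h
    rw [h0, h]
    decide
  · rw [← ZMod.natCast_mod k 2, h]
    simp

lemma int_toNat_cast_zmod {a : ℤ} (ha : 0 ≤ a) : ((a.toNat : ZMod 2)) = ((a : ZMod 2)) := by
  have h : ((a.toNat : ℤ) : ZMod 2) = ((a : ZMod 2)) := by rw [Int.toNat_of_nonneg ha]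
  rwa [Int.cast_natCast] at h

lemma summable_parity (x : ℝ) (hx : 0 ≤ x) (a : ZMod 2) :
    Summable (fun k : ℕ => if ((k : ZMod 2) = a) then x ^ k / (Nat.factorial k : ℝ) else 0) := by
  apply Summable.of_nonneg_of_le (fun k => ?_) (fun k => ?_) (Real.summable_pow_div_factorial x)
  · split
    · positivity
    · exact le_rfl
  · split
    · exact le_rfl
    · positivity

lemma tsum_parity (x : ℝ) (a : ZMod 2) :
    (∑' k : ℕ, if ((k : ZMod 2) = a) then x ^ k / (Nat.factorial k : ℝ) else 0)
      = if a = 0 then Real.cosh x else Real.sinh x := by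
  have hs1 := Real.summable_pow_div_factorial x
  have hs2 := Real.summable_pow_div_factorial (-x)
  have hexp : ∀ y : ℝ, Real.exp y = ∑' k : ℕ, y ^ k / (Nat.factorial k : ℝ) := fun y => by
    rw [Real.exp_eq_exp_ℝ, NormedSpace.exp_eq_tsum_div]
  have ha : ∀ b : ZMod 2, b = 0 ∨ b = 1 := by decide
  rcases ha a with rfl | rfl
  · rw [if_pos rfl, Real.cosh_eq, hexp, hexp, ← Summable.tsum_add hs1 hs2, ← tsum_div_const]
    apply tsum_congr
    intro k
    rcases Nat.even_or_odd k with hk | hk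
    · rw [if_pos ((zmod2_natCast_eq_zero_iff k).mpr (Nat.even_iff.mp hk)), hk.neg_pow]
      ring
    · rw [if_neg (fun hc => by
        have h1 := (zmod2_natCast_eq_zero_iff k).mp hc
        have h2 := Nat.odd_iff.mp hk
        omega), hk.neg_pow]
      ring
  · rw [if_neg (by decide), Real.sinh_eq, hexp, hexp, ← Summable.tsum_sub hs1 hs2, ← tsum_div_const]
    apply tsum_congr
    intro k
    rcases Nat.even_or_odd k with hk | hk
    · rw [if_neg (fun hc => by
        have h1 := (zmod2_natCast_eq_one_iff k).mp hc
        have h2 := Nat.even_iff.mp hk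
        omega), hk.neg_pow]
      ring
    · rw [if_pos ((zmod2_natCast_eq_one_iff k).mpr (Nat.odd_iff.mp hk)), hk.neg_pow]
      ring

lemma tsum_prod_pi (ι : Type) [Finite ι] :
    ∀ (g : ι → ℕ → ℝ), (∀ i, Summable (g i)) → (∀ i k, 0 ≤ g i k) →
    Summable (fun x : ι → ℕ => ∏ᶠ i, g i (x i)) ∧
      (∑' x : ι → ℕ, ∏ᶠ i, g i (x i)) = ∏ᶠ i, ∑' k, g i k := by
  refine Finite.induction_empty_option (P := fun κ => ∀ (g : κ → ℕ → ℝ),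
    (∀ i, Summable (g i)) → (∀ i k, 0 ≤ g i k) →
    Summable (fun x : κ → ℕ => ∏ᶠ i, g i (x i)) ∧
      (∑' x : κ → ℕ, ∏ᶠ i, g i (x i)) = ∏ᶠ i, ∑' k, g i k) ?_ ?_ ?_ ι
  · intro α β e IH g hs hnn
    have IH2 := IH (fun a => g (e a)) (fun a => hs (e a)) (fun a k => hnn (e a) k)
    set E : (α → ℕ) ≃ (β → ℕ) := Equiv.arrowCongr e (Equiv.refl ℕ) with hE
    have hfun : ∀ y : α → ℕ, (∏ᶠ b, g b (E y b)) = ∏ᶠ a, g (e a) (y a) := by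
      intro y
      rw [← finprod_comp_equiv e]
      apply finprod_congr
      intro a
      simp [hE, Equiv.arrowCongr]
    constructor
    · refine (Equiv.summable_iff E).mp ?_
      exact IH2.1.congr fun y => (hfun y).symm
    · rw [← E.tsum_eq (fun x : β → ℕ => ∏ᶠ i, g i (x i))]
      rw [tsum_congr hfun, IH2.2]
      exact finprod_comp_equiv e (f := fun b => ∑' k, g b k)
  · intro g hs hnn
    haveI : Subsingleton (PEmpty → ℕ) := ⟨fun a b => funext fun i => i.elim⟩
    refine ⟨Summable.of_finite, ?_⟩
    rw [tsum_eq_single (fun i : PEmpty => i.elim)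
      (fun b' hb' => absurd (Subsingleton.elim b' _) hb')]
    rw [finprod_of_isEmpty, finprod_of_isEmpty]
  · intro α hα IH g hs hnn
    have IH2 := IH (fun a => g (some a)) (fun a => hs _) (fun a k => hnn _ k)
    have hnn2 : ∀ y : α → ℕ, 0 ≤ ∏ᶠ a, g (some a) (y a) := fun y =>
      finprod_nonneg fun a => hnn _ _
    have hprod : Summable (fun q : ℕ × (α → ℕ) => g none q.1 * ∏ᶠ a, g (some a) (q.2 a)) :=
      Summable.mul_of_nonneg (hs none) IH2.1 (fun k => hnn none k) hnn2
    have hsplit : ∀ x : Option α → ℕ,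
        (∏ᶠ i, g i (x i)) = g none (x none) * ∏ᶠ a, g (some a) (x (some a)) := by
      intro x
      rw [finprod_eq_prod_of_fintype, Fintype.prod_option, finprod_eq_prod_of_fintype]
    have hsplit2 : (∏ᶠ i : Option α, ∑' k, g i k)
        = (∑' k, g none k) * ∏ᶠ a, ∑' k, g (some a) k := by
      rw [finprod_eq_prod_of_fintype, Fintype.prod_option, finprod_eq_prod_of_fintype]
    set E : (Option α → ℕ) ≃ ℕ × (α → ℕ) :=
      (Equiv.piOptionEquivProd (β := fun _ : Option α => ℕ)) with hE
    have hcomp : ∀ x : Option α → ℕ,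
        (∏ᶠ i, g i (x i)) = g none (E x).1 * ∏ᶠ a, g (some a) ((E x).2 a) := by
      intro x; rw [hsplit x]; rfl
    constructor
    · exact (hprod.comp_injective E.injective).congr (fun x => (hcomp x).symm)
    · have e1 : ∑' x : Option α → ℕ, ∏ᶠ i, g i (x i)
          = ∑' q : ℕ × (α → ℕ), g none q.1 * ∏ᶠ a, g (some a) (q.2 a) := by
        rw [← E.tsum_eq (fun q : ℕ × (α → ℕ) => g none q.1 * ∏ᶠ a, g (some a) (q.2 a))]
        exact tsum_congr fun x => hcomp x
      have e2 : ∀ c : ℕ, (∑' y : α → ℕ, g none c * ∏ᶠ a, g (some a) (y a))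
          = g none c * ∏ᶠ a, ∑' k, g (some a) k := by
        intro c; rw [tsum_mul_left, IH2.2]
      calc ∑' x : Option α → ℕ, ∏ᶠ i, g i (x i)
          = ∑' q : ℕ × (α → ℕ), g none q.1 * ∏ᶠ a, g (some a) (q.2 a) := e1
        _ = ∑' c : ℕ, ∑' y : α → ℕ, g none c * ∏ᶠ a, g (some a) (y a) :=
            Summable.tsum_prod' hprod (fun c => IH2.1.mul_left (g none c))
        _ = ∑' c : ℕ, g none c * ∏ᶠ a, ∑' k, g (some a) k := tsum_congr e2
        _ = (∑' k, g none k) * ∏ᶠ a, ∑' k, g (some a) k := tsum_mul_right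
        _ = ∏ᶠ i : Option α, ∑' k, g i k := hsplit2.symm

end CouplingAux
set_option maxHeartbeats 2000000 in
/-- **Coupling, part (a)**: the mod-2 reduction of the random current model is the
high-temperature model. -/
theorem coupling_a (m N : ℕ) (hm : 3 ≤ m) (hN : 1 ≤ N) (β : ℝ) (hβ : 0 < β)
    (γ : OEdge m → ℤ) (hγ : LoopIn m N γ) (hne : (CurSet m N γ).Nonempty) :
    ∀ ω ∈ HTset m N γ,
      rcProb m N β γ {n | ∀ p, ((n p : ZMod 2)) = ω p} = htProb m N β γ ω := by
  classical
  intro ω hω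
  have hF : (C2plus m N).Finite := C2plus_finite m N
  haveI instF : Fintype ↥(C2plus m N) := hF.fintype
  have hx : (0:ℝ) ≤ 2 * β := by positivity
  have hwgt : ∀ nn : OPlaq m → ℤ, wgt m N β nn
      = ∏ p : ↥(C2plus m N), (2*β) ^ ((nn ↑p).toNat) / (Nat.factorial ((nn ↑p).toNat) : ℝ) := by
    intro nn
    simp only [wgt]
    rw [finprod_mem_eq_finite_toFinset_prod _ hF,
      Finset.prod_subtype hF.toFinset (fun p => hF.mem_toFinset)
        (fun p => (2*β) ^ ((nn p).toNat) / (Nat.factorial ((nn p).toNat) : ℝ))]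
  -- main computation for a single mod-2 class
  have piece : ∀ ω' ∈ HTset m N γ,
      Summable (fun n : ↥(CurSet m N γ ∩ {n | ∀ p, ((n p : ZMod 2)) = ω' p}) => wgt m N β ↑n) ∧
      (∑' n : ↥(CurSet m N γ ∩ {n | ∀ p, ((n p : ZMod 2)) = ω' p}), wgt m N β ↑n)
        = Real.cosh (2*β) ^ (Fintype.card ↥(C2plus m N)) * htWeight m N β ω' := by
    intro ω' hω'
    set g : ↥(C2plus m N) → ℕ → ℝ := fun p k =>
      if ((k : ZMod 2) = ω' ↑p) then (2*β) ^ k / (Nat.factorial k : ℝ) else 0 with hg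
    have hgs : ∀ p, Summable (g p) := fun p => summable_parity (2*β) hx _
    have hgn : ∀ p k, 0 ≤ g p k := fun p k => by
      simp only [hg]
      split
      · positivity
      · exact le_rfl
    obtain ⟨S1, S2⟩ := tsum_prod_pi ↥(C2plus m N) g hgs hgn
    set pieceSet := CurSet m N γ ∩ {n | ∀ p, ((n p : ZMod 2)) = ω' p} with hps
    set j : ↥pieceSet → (↥(C2plus m N) → ℕ) :=
      fun n p => ((n : OPlaq m → ℤ) ↑p).toNat with hj
    have hjinj : Function.Injective j := by
      intro n1 n2 h
      apply Subtype.ext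
      apply ext_plus (n1.2.1.1.1) (n1.2.1.1.2.1) (n2.2.1.1.1) (n2.2.1.1.2.1)
      intro p hp
      have h1 := congrFun h ⟨p, hp⟩
      simp only [hj] at h1
      have e1 := Int.toNat_of_nonneg (n1.2.1.1.2.2 p hp)
      have e2 := Int.toNat_of_nonneg (n2.2.1.1.2.2 p hp)
      rw [← e1, ← e2]
      exact_mod_cast h1
    have hsupp : Function.support (fun y : ↥(C2plus m N) → ℕ => ∏ᶠ p, g p (y p))
        ⊆ Set.range j := by
      intro y hy
      rw [Function.mem_support] at hy
      have hfac : ∀ p : ↥(C2plus m N), (((y p : ℕ) : ZMod 2) = ω' ↑p) := by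
        intro p
        by_contra hc
        apply hy
        rw [finprod_eq_prod_of_fintype]
        apply Finset.prod_eq_zero (Finset.mem_univ p)
        simp only [hg]
        rw [if_neg hc]
      set n0 : OPlaq m → ℤ := fun q =>
        if h : q ∈ C2plus m N then ((y ⟨q, h⟩ : ℕ) : ℤ)
        else if h2 : q.neg ∈ C2plus m N then -((y ⟨q.neg, h2⟩ : ℕ) : ℤ) else 0 with hn0
      have hn0plus : ∀ q (h : q ∈ C2plus m N), n0 q = ((y ⟨q, h⟩ : ℕ) : ℤ) :=
        fun q h => dif_pos h
      have hn0neg : ∀ q (h : q ∉ C2plus m N) (h2 : q.neg ∈ C2plus m N),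
          n0 q = -((y ⟨q.neg, h2⟩ : ℕ) : ℤ) := fun q h h2 => by
        simp only [hn0]
        rw [dif_neg h, dif_pos h2]
      have hn0zero : ∀ q, q ∉ C2plus m N → q.neg ∉ C2plus m N → n0 q = 0 := fun q h h2 => by
        simp only [hn0]
        rw [dif_neg h, dif_neg h2]
      have hz : ∀ q, q ∉ C2 m N → n0 q = 0 := by
        intro q hq
        have h1 : q ∉ C2plus m N := fun hc => hq hc.1
        have h2 : q.neg ∉ C2plus m N := fun hc => hq (by
          have h3 := neg_mem_C2 (N := N) hc.1
          rwa [oplaq_neg_neg] at h3)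
        exact hn0zero q h1 h2
      have hanti : ∀ q, n0 (OPlaq.neg q) = - n0 q := by
        intro q
        have hnn := oplaq_neg_neg q
        by_cases h : q ∈ C2plus m N
        · have hno : q.neg ∉ C2plus m N := fun hc => by
            have h2 := hc.2
            rw [neg_ori, h.2] at h2
            simp at h2
          have h2 : (q.neg).neg ∈ C2plus m N := by rwa [hnn]
          rw [hn0neg _ hno h2, hn0plus q h]
          exact congrArg (fun t => -((y t : ℕ) : ℤ)) (Subtype.ext hnn)
        · by_cases h2 : q.neg ∈ C2plus m N
          · rw [hn0plus _ h2, hn0neg q h h2]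
            ring
          · have h3 : (q.neg).neg ∉ C2plus m N := by rwa [hnn]
            rw [hn0zero _ h2 h3, hn0zero q h h2]
            ring
      have hmod : ∀ q, ((n0 q : ZMod 2)) = ω' q := by
        intro q
        by_cases h : q ∈ C2plus m N
        · rw [hn0plus q h]
          push_cast
          exact hfac ⟨q, h⟩
        · by_cases h2 : q.neg ∈ C2plus m N
          · rw [hn0neg q h h2]
            push_cast
            rw [hfac ⟨q.neg, h2⟩, hω'.2.1 q, neg_neg]
          · rw [hn0zero q h h2, hω'.1 q (notMem_C2 h h2)]
            simp
      have hcur : n0 ∈ CurSet m N γ := by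
        refine ⟨⟨hz, hanti, fun p hp => ?_⟩, ?_⟩
        · rw [hn0plus p hp]
          exact Int.natCast_nonneg _
        · intro e he
          have hcong : (∑ᶠ p ∈ cob m N e, ((n0 p : ZMod 2))) = ∑ᶠ p ∈ cob m N e, ω' p :=
            finsum_mem_congr rfl (fun p _ => hmod p)
          rw [hcong, hω'.2.2 e he, CharTwo.add_self_eq_zero]
      refine ⟨⟨n0, hcur, fun p => hmod p⟩, ?_⟩
      funext p
      simp only [hj]
      rw [hn0plus ↑p p.2]
      exact Int.toNat_natCast _
    have hfg : ∀ n : ↥pieceSet, (∏ᶠ p, g p (j n p)) = wgt m N β ↑n := by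
      intro n
      have hpar : ∀ p : ↥(C2plus m N), ((j n p : ZMod 2)) = ω' ↑p := by
        intro p
        have h1 : (0:ℤ) ≤ (n : OPlaq m → ℤ) ↑p := n.2.1.1.2.2 ↑p p.2
        simp only [hj]
        rw [int_toNat_cast_zmod h1]
        exact n.2.2 ↑p
      calc (∏ᶠ p, g p (j n p))
          = ∏ᶠ p : ↥(C2plus m N),
              (2*β) ^ (j n p) / (Nat.factorial (j n p) : ℝ) :=
            finprod_congr (fun p => by
              simp only [hg]
              rw [if_pos (hpar p)])
        _ = wgt m N β ↑n := by
            rw [hwgt ↑n, finprod_eq_prod_of_fintype]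
    have htW : (∏ᶠ p : ↥(C2plus m N), ∑' k, g p k)
        = Real.cosh (2*β) ^ (Fintype.card ↥(C2plus m N)) * htWeight m N β ω' := by
      have h1 : ∀ p : ↥(C2plus m N), (∑' k, g p k)
          = Real.cosh (2*β) * Real.tanh (2*β) ^ (if ω' ↑p = 0 then 0 else 1) := by
        intro p
        simp only [hg]
        rw [tsum_parity (2*β) (ω' ↑p)]
        by_cases h : ω' ↑p = 0
        · rw [if_pos h, if_pos h, pow_zero, mul_one]
        · rw [if_neg h, if_neg h, pow_one, Real.tanh_eq_sinh_div_cosh]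
          have hc := (Real.cosh_pos (2*β)).ne'
          field_simp
      rw [finprod_congr h1, finprod_eq_prod_of_fintype, Finset.prod_mul_distrib,
        Finset.prod_const, Finset.prod_pow_eq_pow_sum, Finset.card_univ]
      congr 1
      simp only [htWeight]
      congr 1
      have e4 : ∀ p : ↥(C2plus m N), (if ω' ↑p = 0 then 0 else 1)
          = (if ¬ (ω' ↑p = 0) then 1 else 0) := fun p => (ite_not _ 1 0).symm
      rw [Finset.sum_congr rfl (fun p _ => e4 p), Finset.sum_boole, Nat.cast_id]
      have e : ↥(suppPlus m N ω') ≃ {p : ↥(C2plus m N) // ¬ ω' ↑p = 0} :=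
        { toFun := fun q => ⟨⟨q.1, q.2.1⟩, q.2.2⟩
          invFun := fun q => ⟨q.1.1, q.1.2, q.2⟩
          left_inv := fun q => rfl
          right_inv := fun q => rfl }
      rw [Nat.card_congr e, Nat.card_eq_fintype_card, Fintype.card_subtype]
    constructor
    · exact (S1.comp_injective hjinj).congr hfg
    · calc (∑' n : ↥pieceSet, wgt m N β ↑n)
          = ∑' n : ↥pieceSet, ∏ᶠ p, g p (j n p) := (tsum_congr hfg).symm
        _ = ∑' y : ↥(C2plus m N) → ℕ, ∏ᶠ p, g p (y p) := hjinj.tsum_eq hsupp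
        _ = ∏ᶠ p : ↥(C2plus m N), ∑' k, g p k := S2
        _ = _ := htW
  -- reduction map lands in HTset
  have hred : ∀ n ∈ CurSet m N γ, (fun p => ((n p : ZMod 2))) ∈ HTset m N γ := by
    intro n hn
    have hgoal : (∀ p, p ∉ C2 m N → ((n p : ZMod 2)) = 0) ∧
        (∀ p, ((n (OPlaq.neg p) : ZMod 2)) = -((n p : ZMod 2))) ∧
        ∀ e ∈ C1 m N, (∑ᶠ p ∈ cob m N e, ((n p : ZMod 2))) = (γ e : ZMod 2) := by
      refine ⟨fun p hp => ?_, fun p => ?_, ?_⟩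
      · show ((n p : ZMod 2)) = 0
        rw [hn.1.1 p hp]
        simp
      · show ((n (OPlaq.neg p) : ZMod 2)) = -((n p : ZMod 2))
        rw [hn.1.2.1 p]
        push_cast
        ring
      · intro e he
        have h0 := hn.2 e he
        have h1 := neg_eq_of_add_eq_zero_right h0
        rw [← h1, CharTwo.neg_eq]
    exact hgoal
  have hHT : (HTset m N γ).Finite := HTset_finite γ
  have hpt : ∀ nn : OPlaq m → ℤ, (CurSet m N γ).indicator (wgt m N β) nn
      = ∑ ω' ∈ hHT.toFinset,
          (CurSet m N γ ∩ {n | ∀ p, ((n p : ZMod 2)) = ω' p}).indicator (wgt m N β) nn := by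
    intro nn
    by_cases hn : nn ∈ CurSet m N γ
    · rw [Set.indicator_of_mem hn, Finset.sum_eq_single (fun p => ((nn p : ZMod 2)))]
      · have hmm : nn ∈ CurSet m N γ ∩
            {n | ∀ p, ((n p : ZMod 2)) = (fun q => ((nn q : ZMod 2))) p} :=
          ⟨hn, fun p => rfl⟩
        exact (Set.indicator_of_mem hmm _).symm
      · intro ω' hmemω' hne'
        apply Set.indicator_of_notMem
        intro hc
        apply hne'
        funext p
        exact (hc.2 p).symm
      · intro habs
        exact absurd (hHT.mem_toFinset.mpr (hred nn hn)) habs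
    · rw [Set.indicator_of_notMem hn, Finset.sum_eq_zero]
      intro ω' _
      exact Set.indicator_of_notMem (fun hc => hn hc.1) _
  have hden : (∑' n : ↥(CurSet m N γ), wgt m N β ↑n)
      = Real.cosh (2*β) ^ (Fintype.card ↥(C2plus m N))
          * ∑ ω' ∈ hHT.toFinset, htWeight m N β ω' := by
    rw [tsum_subtype, tsum_congr hpt]
    rw [Summable.tsum_finsetSum (fun ω' hmemω' =>
        (summable_subtype_iff_indicator (f := wgt m N β)
          (s := CurSet m N γ ∩ {n | ∀ p, ((n p : ZMod 2)) = ω' p})).mp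
          ((piece ω' (hHT.mem_toFinset.mp hmemω')).1))]
    rw [Finset.mul_sum]
    apply Finset.sum_congr rfl
    intro ω' hmemω'
    rw [← tsum_subtype]
    exact (piece ω' (hHT.mem_toFinset.mp hmemω')).2
  have hfin : (∑ᶠ ω' ∈ HTset m N γ, htWeight m N β ω')
      = ∑ ω' ∈ hHT.toFinset, htWeight m N β ω' := by
    rw [finsum_mem_eq_finite_toFinset_sum _ hHT]
  simp only [rcProb, htProb]
  rw [(piece ω hω).2, hden, hfin]
  exact mul_div_mul_left _ _ (pow_ne_zero _ (Real.cosh_pos (2*β)).ne')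
end LGT
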